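/- Let n ≥ 1 and let H and H' be subgroups of the dihedral group DihedralGroup n. If H and H' have the same odd (finite) order, then H = H'. In particular, every cyclic subgroup of odd order of a dihedral group is uniquely determined by its order. -/

import Mathlib

/-- In a finite cyclic (commutative) group, subgroups of the same cardinality coincide. -/
lemma cyclic_subgroup_eq_of_card_eq {G : Type*} [CommGroup G] [Fintype G] [IsCyclic G]
    (K K' : Subgroup G) (h : Nat.card K = Nat.card K') : K = K' := by
  classical
  have key : ∀ L : Subgroup G, L = (powMonoidHom (Nat.card L) : G →* G).ker := by
    intro L
    set d := Nat.card L with hd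
    have hd0 : 0 < d := Nat.card_pos
    have hle : L ≤ (powMonoidHom d : G →* G).ker := by
      intro x hx
      simp only [MonoidHom.mem_ker, powMonoidHom_apply]
      exact orderOf_dvd_iff_pow_eq_one.mp (Subgroup.orderOf_dvd_natCard L hx)
    have hcardle : Nat.card ((powMonoidHom d : G →* G).ker) ≤ d := by
      have := IsCyclic.card_pow_eq_one_le (α := G) hd0
      calc Nat.card ((powMonoidHom d : G →* G).ker)
          = Fintype.card {x : G // x ^ d = 1} := by
            rw [Nat.card_eq_fintype_card]
            apply Fintype.card_congr
            exact Equiv.subtypeEquivRight (fun x => by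
              simp [MonoidHom.mem_ker, powMonoidHom_apply])
        _ = (Finset.univ.filter (fun x : G => x ^ d = 1)).card := by
            rw [Fintype.card_subtype]
        _ ≤ d := this
    have hLS : Nat.card L ≤ Nat.card ((powMonoidHom d : G →* G).ker) :=
      Nat.card_le_card_of_injective _ (Set.inclusion_injective hle)
    have : Nat.card ((powMonoidHom d : G →* G).ker) = d := le_antisymm hcardle (hd ▸ hLS)
    apply le_antisymm hle
    intro x hx
    by_contra hxL
    have hlt : Nat.card L < Nat.card ((powMonoidHom d : G →* G).ker) := by
      have hssub : (L : Set G) ⊂ ((powMonoidHom d : G →* G).ker : Set G) :=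
        ⟨hle, fun hsub => hxL (hsub hx)⟩
      have := Set.ncard_lt_ncard hssub (Set.toFinite _)
      rw [← Nat.card_coe_set_eq, ← Nat.card_coe_set_eq] at this; exact this
    omega
  rw [key K, key K', h]

/-- Two subgroups of a dihedral group `DihedralGroup n` (`n ≥ 1`) with the
same odd order coincide; in particular, every cyclic subgroup of odd order of a dihedral
group is uniquely determined by its order. -/
theorem dihedral_subgroups_of_same_odd_order_eq
    (n : ℕ) (hn : 1 ≤ n) (H H' : Subgroup (DihedralGroup n))
    (hcard : Nat.card H = Nat.card H') (hodd : Odd (Nat.card H)) :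
    H = H' := by
  have : NeZero n := ⟨by omega⟩
  -- the rotation homomorphism
  let φ : Multiplicative (ZMod n) →* DihedralGroup n :=
    { toFun := fun i => DihedralGroup.r i.toAdd
      map_one' := rfl
      map_mul' := fun i j => by
        simp [DihedralGroup.r_mul_r] }
  have hinj : Function.Injective φ := by
    intro a b hab
    exact Multiplicative.toAdd.injective (DihedralGroup.r.inj hab)
  -- any subgroup of odd order consists of rotations
  have key : ∀ L : Subgroup (DihedralGroup n), Odd (Nat.card L) → L ≤ φ.range := by
    intro L hLodd x hx
    cases x with
    | r i => exact ⟨Multiplicative.ofAdd i, rfl⟩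
    | sr i =>
      exfalso
      have h2 : (2 : ℕ) ∣ Nat.card L := by
        have := Subgroup.orderOf_dvd_natCard L hx
        rwa [DihedralGroup.orderOf_sr] at this
      rw [Nat.odd_iff] at hLodd
      omega
  have hH := key H hodd
  have hH' := key H' (hcard ▸ hodd)
  have hmap : Subgroup.map φ (H.comap φ) = H := Subgroup.map_comap_eq_self hH
  have hmap' : Subgroup.map φ (H'.comap φ) = H' := Subgroup.map_comap_eq_self hH'
  have hcards : ∀ L : Subgroup (DihedralGroup n),
      Nat.card (L.comap φ) = Nat.card (Subgroup.map φ (L.comap φ)) := fun L =>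
    Nat.card_congr (Subgroup.equivMapOfInjective (L.comap φ) φ hinj).toEquiv
  have : H.comap φ = H'.comap φ := by
    apply cyclic_subgroup_eq_of_card_eq
    rw [hcards H, hcards H', hmap, hmap', hcard]
  rw [← hmap, ← hmap', this]
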